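/- Let $X_1,\dots,X_{2n+1}$ be random variables on a common probability space such that $P(|X_i| > \tfrac{n}{n+1}a) > \tfrac{2n}{2n+1}$ for each $i$, where $a > 0$. Then $P(X_1 + \cdots + X_{2n+1} \ne 0) > 0$. -/

import Mathlib

open Finset in
lemma pos_case (n : ℕ) (a : ℝ) (ha : 0 < a) (x : Fin (2*n+1) → ℝ)
    (h1 : ∀ i, |x i| ≤ a) (h2 : ∀ i, (n / (n+1) : ℝ) * a < |x i|)
    (hP : n + 1 ≤ (Finset.univ.filter (fun i => 0 < x i)).card) :
    0 < ∑ i, x i := by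
  set P := Finset.univ.filter (fun i => 0 < x i) with hPdef
  have hPsub : P ⊆ Finset.univ := Finset.subset_univ _
  have hsplit : ∑ i, x i = ∑ i ∈ P, x i + ∑ i ∈ Finset.univ \ P, x i := by
    exact ((Finset.sum_sdiff hPsub).symm.trans (add_comm _ _))
  have hPne : P.Nonempty := Finset.card_pos.mp (by omega)
  have hsumP : (P.card : ℝ) * ((n / (n+1) : ℝ) * a) < ∑ i ∈ P, x i := by
    have := Finset.sum_lt_sum_of_nonempty hPne (f := fun _ => (n / (n+1) : ℝ) * a)
      (g := x) (fun i hi => by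
      have hx : 0 < x i := (Finset.mem_filter.mp hi).2
      calc (n / (n+1) : ℝ) * a < |x i| := h2 i
        _ = x i := abs_of_pos hx)
    simpa using this
  have hsumN : -((Finset.univ \ P).card : ℝ) * a ≤ ∑ i ∈ Finset.univ \ P, x i := by
    have := Finset.card_nsmul_le_sum (Finset.univ \ P) x (-a) (fun i _ => by
      have := h1 i
      have := neg_abs_le (x i)
      linarith)
    simpa [nsmul_eq_mul, mul_comm] using this
  have hcard : P.card + (Finset.univ \ P).card = 2*n+1 := by
    rw [Finset.card_sdiff_of_subset hPsub]
    have : P.card ≤ (Finset.univ : Finset (Fin (2*n+1))).card := Finset.card_le_card hPsub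
    simp at this ⊢
    omega
  set p := P.card
  set q := (Finset.univ \ P).card
  have hq : q ≤ n := by omega
  have hkey : (0:ℝ) ≤ (p : ℝ) * ((n / (n+1) : ℝ) * a) - (q : ℝ) * a := by
    have hn1 : (0:ℝ) < (n:ℝ) + 1 := by positivity
    have hp' : ((n:ℝ)+1) ≤ (p:ℝ) := by exact_mod_cast Nat.cast_le.mpr hP
    have hq' : (q:ℝ) ≤ (n:ℝ) := by exact_mod_cast hq
    have key : (q:ℝ) * ((n:ℝ)+1) ≤ (p:ℝ) * (n:ℝ) := by nlinarith
    rw [sub_nonneg]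
    rw [show (p : ℝ) * ((n / (n+1) : ℝ) * a) = (p:ℝ) * (n:ℝ) * a / ((n:ℝ)+1) by ring,
      le_div_iff₀ hn1]
    nlinarith
  linarith

lemma sum_ne (n : ℕ) (hn : 1 ≤ n) (a : ℝ) (ha : 0 < a) (x : Fin (2*n+1) → ℝ)
    (h1 : ∀ i, |x i| ≤ a) (h2 : ∀ i, (n / (n+1) : ℝ) * a < |x i|) : ∑ i, x i ≠ 0 := by
  have hn0 : (0:ℝ) < (n:ℝ) := by exact_mod_cast hn
  have hcpos : (0:ℝ) < (n / (n+1) : ℝ) * a := by positivity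
  have hxne : ∀ i, x i ≠ 0 := fun i => by
    have := h2 i
    intro h
    rw [h] at this
    simp at this
    linarith
  by_cases hc : n + 1 ≤ (Finset.univ.filter (fun i => 0 < x i)).card
  · exact ne_of_gt (pos_case n a ha x h1 h2 hc)
  · have heq : (Finset.univ.filter fun i : Fin (2*n+1) => 0 < -x i)
        = Finset.univ.filter (fun i => ¬ 0 < x i) := by
      apply Finset.filter_congr
      intro i _
      simp only [neg_pos, eq_iff_iff]
      constructor
      · intro h; linarith
      · intro h
        push_neg at h
        exact lt_of_le_of_ne h (hxne i)
    have hcard2 : n + 1 ≤ (Finset.univ.filter (fun i : Fin (2*n+1) => 0 < -x i)).card := by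
      rw [heq, Finset.filter_not, Finset.card_sdiff_of_subset (Finset.filter_subset _ _)]
      have h1c : (Finset.univ : Finset (Fin (2*n+1))).card = 2*n+1 := by simp
      omega
    have := pos_case n a ha (fun i => -(x i))
      (fun i => by rw [abs_neg]; exact h1 i)
      (fun i => by rw [abs_neg]; exact h2 i) hcard2
    rw [Finset.sum_neg_distrib] at this
    exact ne_of_lt (by linarith)



open MeasureTheory

/-- If `P(|X i| > n a/(n+1)) > 2n/(2n+1)` for each of `2n+1` random variables with values
in `[-a,a]` a.s., then `P(∑ X i ≠ 0) > 0`. -/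
theorem stmt2 (n : ℕ) (hn : 1 ≤ n) (a : ℝ) (ha : 0 < a)
    (Ω : Type*) [MeasurableSpace Ω] (μ : Measure Ω) [IsProbabilityMeasure μ]
    (X : Fin (2 * n + 1) → Ω → ℝ) (hXm : ∀ i, Measurable (X i))
    (hbound : ∀ i, μ {ω | |X i ω| ≤ a} = 1)
    (htail : ∀ i, ENNReal.ofReal ((2 * n : ℝ) / (2 * n + 1)) <
      μ {ω | (n / (n + 1) : ℝ) * a < |X i ω|}) :
    0 < μ {ω | ∑ i, X i ω ≠ 0} := by
  set A : Fin (2*n+1) → Set Ω := fun i => {ω | (n / (n + 1) : ℝ) * a < |X i ω|} with hA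
  have hAm : ∀ i, MeasurableSet (A i) :=
    fun i => measurableSet_lt measurable_const (hXm i).abs
  have hBm : ∀ i, MeasurableSet {ω | |X i ω| ≤ a} :=
    fun i => measurableSet_le (hXm i).abs measurable_const
  have hden : (0:ℝ) < 2*(n:ℝ)+1 := by positivity
  -- complement bounds
  have hcompl : ∀ i, μ (A i)ᶜ < ENNReal.ofReal (1/(2*(n:ℝ)+1)) := by
    intro i
    rw [prob_compl_eq_one_sub (hAm i), ENNReal.sub_lt_iff_lt_right (measure_ne_top μ _) prob_le_one]
    have hsum : ENNReal.ofReal (1/(2*(n:ℝ)+1)) + ENNReal.ofReal ((2 * n : ℝ) / (2 * n + 1)) = 1 := by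
      rw [← ENNReal.ofReal_add (by positivity) (by positivity)]
      rw [← add_div]
      rw [show (1 + 2*(n:ℝ))/(2*n+1) = 1 by rw [div_eq_one_iff_eq (by positivity)]; ring]
      simp
    calc (1:ENNReal) = ENNReal.ofReal (1/(2*(n:ℝ)+1)) + ENNReal.ofReal ((2 * n : ℝ) / (2 * n + 1)) := hsum.symm
      _ < ENNReal.ofReal (1/(2*(n:ℝ)+1)) + μ (A i) :=
        ENNReal.add_lt_add_left ENNReal.ofReal_ne_top (htail i)
  have hU : μ (⋃ i, (A i)ᶜ) < 1 := by
    calc μ (⋃ i, (A i)ᶜ) ≤ ∑ i, μ (A i)ᶜ := measure_iUnion_fintype_le _ _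
      _ < (∑ _i : Fin (2*n+1), ENNReal.ofReal (1/(2*(n:ℝ)+1))) :=
        ENNReal.sum_lt_sum_of_nonempty Finset.univ_nonempty (fun i _ => hcompl i)
      _ = 1 := by
        rw [Finset.sum_const, Finset.card_univ, Fintype.card_fin, nsmul_eq_mul,
          ← ENNReal.ofReal_natCast, ← ENNReal.ofReal_mul (by positivity)]
        rw [show ((2*n+1 : ℕ) : ℝ) * (1/(2*(n:ℝ)+1)) = 1 by
          push_cast; field_simp]
        simp
  have hSpos : 0 < μ (⋂ i, A i) := by
    have : μ (⋂ i, A i) = 1 - μ (⋃ i, (A i)ᶜ) := by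
      rw [show (⋂ i, A i) = (⋃ i, (A i)ᶜ)ᶜ by simp [Set.compl_iUnion],
        measure_compl (MeasurableSet.iUnion fun i => (hAm i).compl) (measure_ne_top μ _),
        measure_univ]
    rw [this]
    exact tsub_pos_of_lt hU
  have hBc : μ (⋂ i, {ω | |X i ω| ≤ a})ᶜ = 0 := by
    rw [Set.compl_iInter]
    refine le_antisymm ?_ zero_le
    calc μ (⋃ i, {ω | |X i ω| ≤ a}ᶜ) ≤ ∑ i, μ {ω | |X i ω| ≤ a}ᶜ := measure_iUnion_fintype_le _ _
      _ = 0 := by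
        refine Finset.sum_eq_zero fun i _ => ?_
        rw [prob_compl_eq_one_sub (hBm i), hbound i, tsub_self]
  have hmain : 0 < μ ((⋂ i, A i) ∩ ⋂ i, {ω | |X i ω| ≤ a}) := by
    rcases (zero_le : 0 ≤ μ ((⋂ i, A i) ∩ ⋂ i, {ω | |X i ω| ≤ a})).lt_or_eq with h | h
    · exact h
    exfalso
    have := measure_le_inter_add_diff μ (⋂ i, A i) (⋂ i, {ω | |X i ω| ≤ a})
    have hdiff : μ ((⋂ i, A i) \ ⋂ i, {ω | |X i ω| ≤ a}) = 0 :=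
      le_antisymm (le_trans (measure_mono (Set.diff_subset_compl _ _)) hBc.le) zero_le
    rw [← h, hdiff, add_zero] at this
    exact absurd (le_antisymm this zero_le) (ne_of_gt hSpos)
  refine lt_of_lt_of_le hmain (measure_mono ?_)
  rintro ω ⟨hω1, hω2⟩
  simp only [Set.mem_iInter, Set.mem_setOf_eq] at hω1 hω2 ⊢
  exact sum_ne n hn a ha (fun i => X i ω) hω2 hω1
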